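/- Let B : ℝ → M_N(ℂ) be a matrix-valued function. Then for all real k₁ ≠ ±k₂ the boundary Yang–Baxter equation R(k₁−k₂)·B₁(k₁)·R(k₁+k₂)·B₂(k₂) = B₂(k₂)·R(k₁+k₂)·B₁(k₁)·R(k₁−k₂) holds (where B₁(k) = B(k)⊗I and B₂(k) = I⊗B(k)) if and only if both of the following hold for all real k₁ ≠ ±k₂: (i) [B(k₁), B(k₂)] = 0, and (ii) (B(k₁)B(k₂))⊗I − I⊗(B(k₂)B(k₁)) = ((k₁+k₂)/(k₁−k₂))·(B(k₁)⊗B(k₂) − B(k₂)⊗B(k₁)). -/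

import Mathlib

open Matrix Kronecker

/-- The flip (permutation) matrix `P = Σ_{i,j} E_{ij} ⊗ E_{ji}` on `ℂ^N ⊗ ℂ^N`. -/
noncomputable def flipMat (N : ℕ) : Matrix (Fin N × Fin N) (Fin N × Fin N) ℂ :=
  Matrix.of fun p q => if p.1 = q.2 ∧ p.2 = q.1 then 1 else 0

/-- The rational R-matrix `R(k) = (1/(k+ig)) (k · I⊗I + ig · P)` of the gl(N)-NLS model. -/
noncomputable def Rmat (N : ℕ) (g : ℝ) (k : ℝ) :
    Matrix (Fin N × Fin N) (Fin N × Fin N) ℂ :=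
  ((k : ℂ) + Complex.I * (g : ℂ))⁻¹ •
    ((k : ℂ) • (1 : Matrix (Fin N × Fin N) (Fin N × Fin N) ℂ)
      + (Complex.I * (g : ℂ)) • flipMat N)

namespace BYBEaux

variable {N : ℕ}

lemma flip_mul_flip : flipMat N * flipMat N = 1 := by
  ext ⟨a,b⟩ ⟨c,d⟩
  simp [flipMat, Matrix.mul_apply, Fintype.sum_prod_type, Matrix.one_apply, Prod.ext_iff,
    ite_and, eq_comm, and_comm]

lemma flip_mul_kron (A B : Matrix (Fin N) (Fin N) ℂ) :
    flipMat N * (A ⊗ₖ B) = (B ⊗ₖ A) * flipMat N := by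
  ext ⟨a,b⟩ ⟨c,d⟩
  simp [flipMat, Matrix.mul_apply, Fintype.sum_prod_type, kroneckerMap_apply, ite_and, mul_comm]

lemma flip_mul_flip_assoc (M : Matrix (Fin N × Fin N) (Fin N × Fin N) ℂ) :
    flipMat N * (flipMat N * M) = M := by
  rw [← mul_assoc, flip_mul_flip, one_mul]

lemma flip_mul_kron_assoc (A B : Matrix (Fin N) (Fin N) ℂ)
    (M : Matrix (Fin N × Fin N) (Fin N × Fin N) ℂ) :
    flipMat N * ((A ⊗ₖ B) * M) = (B ⊗ₖ A) * (flipMat N * M) := by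
  rw [← mul_assoc, flip_mul_kron, mul_assoc]

lemma kron_mul_kron_assoc (A B C D : Matrix (Fin N) (Fin N) ℂ)
    (M : Matrix (Fin N × Fin N) (Fin N × Fin N) ℂ) :
    (A ⊗ₖ B) * ((C ⊗ₖ D) * M) = ((A*C) ⊗ₖ (B*D)) * M := by
  rw [← mul_assoc, Matrix.mul_kronecker_mul]

lemma sub_kron (A B C : Matrix (Fin N) (Fin N) ℂ) :
    (A - B) ⊗ₖ C = A ⊗ₖ C - B ⊗ₖ C := by
  ext ⟨a,b⟩ ⟨c,d⟩
  simp [kroneckerMap_apply, sub_mul]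

lemma kron_sub (A B C : Matrix (Fin N) (Fin N) ℂ) :
    A ⊗ₖ (B - C) = A ⊗ₖ B - A ⊗ₖ C := by
  ext ⟨a,b⟩ ⟨c,d⟩
  simp [kroneckerMap_apply, mul_sub]

lemma expand_diff (u v b : ℂ) (X Y : Matrix (Fin N) (Fin N) ℂ) :
    (u•1 + b•flipMat N) * (X ⊗ₖ (1 : Matrix (Fin N) (Fin N) ℂ)) * (v•1 + b•flipMat N) *
        ((1 : Matrix (Fin N) (Fin N) ℂ) ⊗ₖ Y)
      - ((1 : Matrix (Fin N) (Fin N) ℂ) ⊗ₖ Y) * (v•1 + b•flipMat N) *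
        (X ⊗ₖ (1 : Matrix (Fin N) (Fin N) ℂ)) * (u•1 + b•flipMat N)
    = (u*b) • (((X*Y) ⊗ₖ (1 : Matrix (Fin N) (Fin N) ℂ)) * flipMat N)
      - (u*b) • (((1 : Matrix (Fin N) (Fin N) ℂ) ⊗ₖ (Y*X)) * flipMat N)
      + (v*b) • ((Y ⊗ₖ X) * flipMat N)
      - (v*b) • ((X ⊗ₖ Y) * flipMat N)
      + (b*b) • ((1 : Matrix (Fin N) (Fin N) ℂ) ⊗ₖ (X*Y))
      - (b*b) • ((1 : Matrix (Fin N) (Fin N) ℂ) ⊗ₖ (Y*X)) := by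
  simp only [add_mul, mul_add, smul_mul_assoc, mul_smul_comm, smul_smul, one_mul, mul_one,
    mul_assoc, flip_mul_kron_assoc, flip_mul_flip_assoc, kron_mul_kron_assoc,
    flip_mul_kron, flip_mul_flip, ← Matrix.mul_kronecker_mul, Matrix.one_kronecker_one]
  module

lemma coeff_ne_zero (g : ℝ) (hg : 0 < g) (k : ℝ) :
    (k : ℂ) + Complex.I * (g : ℂ) ≠ 0 := by
  intro h
  have him := congrArg Complex.im h
  simp [Complex.add_im, Complex.mul_im] at him
  exact hg.ne' him

lemma b_ne_zero (g : ℝ) (hg : 0 < g) : Complex.I * (g : ℂ) ≠ 0 :=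
  mul_ne_zero Complex.I_ne_zero (by exact_mod_cast hg.ne')

/-- Per-pair reduction of the boundary YBE to a polynomial identity. -/
lemma step (N : ℕ) (g : ℝ) (hg : 0 < g) (X Y : Matrix (Fin N) (Fin N) ℂ) (k₁ k₂ : ℝ) :
    (Rmat N g (k₁ - k₂) * (X ⊗ₖ (1 : Matrix (Fin N) (Fin N) ℂ)) *
          Rmat N g (k₁ + k₂) * ((1 : Matrix (Fin N) (Fin N) ℂ) ⊗ₖ Y) =
        ((1 : Matrix (Fin N) (Fin N) ℂ) ⊗ₖ Y) * Rmat N g (k₁ + k₂) *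
          (X ⊗ₖ (1 : Matrix (Fin N) (Fin N) ℂ)) * Rmat N g (k₁ - k₂)) ↔
    (((k₁ - k₂ : ℝ) : ℂ) • (((X*Y) ⊗ₖ (1 : Matrix (Fin N) (Fin N) ℂ)) * flipMat N)
      - ((k₁ - k₂ : ℝ) : ℂ) • (((1 : Matrix (Fin N) (Fin N) ℂ) ⊗ₖ (Y*X)) * flipMat N)
      + ((k₁ + k₂ : ℝ) : ℂ) • ((Y ⊗ₖ X) * flipMat N)
      - ((k₁ + k₂ : ℝ) : ℂ) • ((X ⊗ₖ Y) * flipMat N)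
      + (Complex.I * (g:ℂ)) • ((1 : Matrix (Fin N) (Fin N) ℂ) ⊗ₖ (X*Y))
      - (Complex.I * (g:ℂ)) • ((1 : Matrix (Fin N) (Fin N) ℂ) ⊗ₖ (Y*X)) = 0) := by
  set u : ℂ := ((k₁ - k₂ : ℝ) : ℂ)
  set v : ℂ := ((k₁ + k₂ : ℝ) : ℂ)
  set b : ℂ := Complex.I * (g:ℂ) with hbdef
  have hu : u + b ≠ 0 := coeff_ne_zero g hg _
  have hv : v + b ≠ 0 := coeff_ne_zero g hg _
  have hb : b ≠ 0 := b_ne_zero g hg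
  have hs : (u + b)⁻¹ * (v + b)⁻¹ ≠ 0 := mul_ne_zero (inv_ne_zero hu) (inv_ne_zero hv)
  have hR1 : Rmat N g (k₁ - k₂) = (u + b)⁻¹ • (u • 1 + b • flipMat N) := rfl
  have hR2 : Rmat N g (k₁ + k₂) = (v + b)⁻¹ • (v • 1 + b • flipMat N) := rfl
  rw [hR1, hR2]
  have eL : ((u + b)⁻¹ • (u • 1 + b • flipMat N)) * (X ⊗ₖ (1 : Matrix (Fin N) (Fin N) ℂ)) *
        ((v + b)⁻¹ • (v • 1 + b • flipMat N)) * ((1 : Matrix (Fin N) (Fin N) ℂ) ⊗ₖ Y)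
      = ((u + b)⁻¹ * (v + b)⁻¹) •
        ((u • 1 + b • flipMat N) * (X ⊗ₖ (1 : Matrix (Fin N) (Fin N) ℂ)) *
          (v • 1 + b • flipMat N) * ((1 : Matrix (Fin N) (Fin N) ℂ) ⊗ₖ Y)) := by
    simp only [smul_mul_assoc, mul_smul_comm, smul_smul]
    try module
  have eR : ((1 : Matrix (Fin N) (Fin N) ℂ) ⊗ₖ Y) * ((v + b)⁻¹ • (v • 1 + b • flipMat N)) *
        (X ⊗ₖ (1 : Matrix (Fin N) (Fin N) ℂ)) * ((u + b)⁻¹ • (u • 1 + b • flipMat N))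
      = ((u + b)⁻¹ * (v + b)⁻¹) •
        (((1 : Matrix (Fin N) (Fin N) ℂ) ⊗ₖ Y) * (v • 1 + b • flipMat N) *
          (X ⊗ₖ (1 : Matrix (Fin N) (Fin N) ℂ)) * (u • 1 + b • flipMat N)) := by
    simp only [smul_mul_assoc, mul_smul_comm, smul_smul]
    try module
  rw [eL, eR, smul_right_inj hs, ← sub_eq_zero, expand_diff]
  have factor :
      (u*b) • (((X*Y) ⊗ₖ (1 : Matrix (Fin N) (Fin N) ℂ)) * flipMat N)
      - (u*b) • (((1 : Matrix (Fin N) (Fin N) ℂ) ⊗ₖ (Y*X)) * flipMat N)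
      + (v*b) • ((Y ⊗ₖ X) * flipMat N)
      - (v*b) • ((X ⊗ₖ Y) * flipMat N)
      + (b*b) • ((1 : Matrix (Fin N) (Fin N) ℂ) ⊗ₖ (X*Y))
      - (b*b) • ((1 : Matrix (Fin N) (Fin N) ℂ) ⊗ₖ (Y*X))
      = b • (u • (((X*Y) ⊗ₖ (1 : Matrix (Fin N) (Fin N) ℂ)) * flipMat N)
      - u • (((1 : Matrix (Fin N) (Fin N) ℂ) ⊗ₖ (Y*X)) * flipMat N)
      + v • ((Y ⊗ₖ X) * flipMat N)
      - v • ((X ⊗ₖ Y) * flipMat N)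
      + b • ((1 : Matrix (Fin N) (Fin N) ℂ) ⊗ₖ (X*Y))
      - b • ((1 : Matrix (Fin N) (Fin N) ℂ) ⊗ₖ (Y*X))) := by
    module
  rw [factor, smul_eq_zero]
  simp [hb]

lemma kron_id_add_eq_zero (hN : 1 ≤ N) (C : Matrix (Fin N) (Fin N) ℂ)
    (h : C ⊗ₖ (1 : Matrix (Fin N) (Fin N) ℂ) + (1 : Matrix (Fin N) (Fin N) ℂ) ⊗ₖ C = 0) :
    C = 0 := by
  ext i j
  by_cases hij : i = j
  · subst hij
    have hii := congrFun (congrFun h (i,i)) (i,i)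
    simp [kroneckerMap_apply, Matrix.one_apply] at hii
    simpa using hii
  · have hij' := congrFun (congrFun h (i,j)) (j,j)
    simp [kroneckerMap_apply, Matrix.one_apply, hij] at hij'
    simpa using hij'

end BYBEaux

open BYBEaux in
/-- The boundary Yang–Baxter equation for `B : ℝ → M_N(ℂ)` is equivalent to the
commutativity condition together with the tensor identity (ii). -/
theorem boundary_YBE_iff (N : ℕ) (hN : 1 ≤ N) (g : ℝ) (hg : 0 < g)
    (B : ℝ → Matrix (Fin N) (Fin N) ℂ) :
    (∀ k₁ k₂ : ℝ, k₁ ≠ k₂ → k₁ ≠ -k₂ →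
      Rmat N g (k₁ - k₂) * (B k₁ ⊗ₖ (1 : Matrix (Fin N) (Fin N) ℂ)) *
          Rmat N g (k₁ + k₂) * ((1 : Matrix (Fin N) (Fin N) ℂ) ⊗ₖ B k₂) =
        ((1 : Matrix (Fin N) (Fin N) ℂ) ⊗ₖ B k₂) * Rmat N g (k₁ + k₂) *
          (B k₁ ⊗ₖ (1 : Matrix (Fin N) (Fin N) ℂ)) * Rmat N g (k₁ - k₂)) ↔
    (∀ k₁ k₂ : ℝ, k₁ ≠ k₂ → k₁ ≠ -k₂ →
      B k₁ * B k₂ - B k₂ * B k₁ = 0 ∧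
      (B k₁ * B k₂) ⊗ₖ (1 : Matrix (Fin N) (Fin N) ℂ)
          - (1 : Matrix (Fin N) (Fin N) ℂ) ⊗ₖ (B k₂ * B k₁) =
        (((k₁ + k₂) / (k₁ - k₂) : ℝ) : ℂ) •
          (B k₁ ⊗ₖ B k₂ - B k₂ ⊗ₖ B k₁)) := by
  constructor
  · intro H k₁ k₂ h1 h2
    set X := B k₁ with hX
    set Y := B k₂ with hY
    have hu : ((k₁ - k₂ : ℝ) : ℂ) ≠ 0 := by
      exact_mod_cast Complex.ofReal_ne_zero.mpr (sub_ne_zero.mpr h1)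
    have E1 := (step N g hg X Y k₁ k₂).mp (H k₁ k₂ h1 h2)
    have h1' : k₂ ≠ k₁ := Ne.symm h1
    have h2' : k₂ ≠ -k₁ := fun h => h2 (by linarith)
    have E2 := (step N g hg Y X k₂ k₁).mp (H k₂ k₁ h1' h2')
    have e1 : ((k₂ - k₁ : ℝ) : ℂ) = -((k₁ - k₂ : ℝ) : ℂ) := by push_cast; ring
    have e2 : ((k₂ + k₁ : ℝ) : ℂ) = ((k₁ + k₂ : ℝ) : ℂ) := by push_cast; ring
    rw [e1, e2] at E2
    -- Step 1: commutativity
    have S : ((k₁ - k₂ : ℝ) : ℂ) •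
        (((X*Y - Y*X) ⊗ₖ (1 : Matrix (Fin N) (Fin N) ℂ)
          + (1 : Matrix (Fin N) (Fin N) ℂ) ⊗ₖ (X*Y - Y*X)) * flipMat N) = 0 := by
      calc ((k₁ - k₂ : ℝ) : ℂ) •
            (((X*Y - Y*X) ⊗ₖ (1 : Matrix (Fin N) (Fin N) ℂ)
              + (1 : Matrix (Fin N) (Fin N) ℂ) ⊗ₖ (X*Y - Y*X)) * flipMat N)
          = (((k₁ - k₂ : ℝ) : ℂ) • (((X*Y) ⊗ₖ (1 : Matrix (Fin N) (Fin N) ℂ)) * flipMat N)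
            - ((k₁ - k₂ : ℝ) : ℂ) • (((1 : Matrix (Fin N) (Fin N) ℂ) ⊗ₖ (Y*X)) * flipMat N)
            + ((k₁ + k₂ : ℝ) : ℂ) • ((Y ⊗ₖ X) * flipMat N)
            - ((k₁ + k₂ : ℝ) : ℂ) • ((X ⊗ₖ Y) * flipMat N)
            + (Complex.I * (g:ℂ)) • ((1 : Matrix (Fin N) (Fin N) ℂ) ⊗ₖ (X*Y))
            - (Complex.I * (g:ℂ)) • ((1 : Matrix (Fin N) (Fin N) ℂ) ⊗ₖ (Y*X)))
          + ((-((k₁ - k₂ : ℝ) : ℂ)) • (((Y*X) ⊗ₖ (1 : Matrix (Fin N) (Fin N) ℂ)) * flipMat N)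
            - (-((k₁ - k₂ : ℝ) : ℂ)) • (((1 : Matrix (Fin N) (Fin N) ℂ) ⊗ₖ (X*Y)) * flipMat N)
            + ((k₁ + k₂ : ℝ) : ℂ) • ((X ⊗ₖ Y) * flipMat N)
            - ((k₁ + k₂ : ℝ) : ℂ) • ((Y ⊗ₖ X) * flipMat N)
            + (Complex.I * (g:ℂ)) • ((1 : Matrix (Fin N) (Fin N) ℂ) ⊗ₖ (Y*X))
            - (Complex.I * (g:ℂ)) • ((1 : Matrix (Fin N) (Fin N) ℂ) ⊗ₖ (X*Y))) := by
            simp only [sub_kron, kron_sub, add_mul, sub_mul]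
            module
        _ = 0 := by rw [E1, E2]; simp
    have T0 : ((X*Y - Y*X) ⊗ₖ (1 : Matrix (Fin N) (Fin N) ℂ)
        + (1 : Matrix (Fin N) (Fin N) ℂ) ⊗ₖ (X*Y - Y*X)) * flipMat N = 0 :=
      (smul_eq_zero.mp S).resolve_left hu
    have T1 : (X*Y - Y*X) ⊗ₖ (1 : Matrix (Fin N) (Fin N) ℂ)
        + (1 : Matrix (Fin N) (Fin N) ℂ) ⊗ₖ (X*Y - Y*X) = 0 := by
      have := congrArg (· * flipMat N) T0
      simpa [mul_assoc, flip_mul_flip] using this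
    have hC : X*Y - Y*X = 0 := kron_id_add_eq_zero hN _ T1
    refine ⟨hC, ?_⟩
    -- Step 2: the tensor identity
    have hXY : X*Y = Y*X := sub_eq_zero.mp hC
    rw [hXY] at E1
    have T2 : (((k₁ - k₂ : ℝ) : ℂ) • ((Y*X) ⊗ₖ (1 : Matrix (Fin N) (Fin N) ℂ)
          - (1 : Matrix (Fin N) (Fin N) ℂ) ⊗ₖ (Y*X))
        - ((k₁ + k₂ : ℝ) : ℂ) • (X ⊗ₖ Y - Y ⊗ₖ X)) * flipMat N = 0 := by
      calc (((k₁ - k₂ : ℝ) : ℂ) • ((Y*X) ⊗ₖ (1 : Matrix (Fin N) (Fin N) ℂ)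
              - (1 : Matrix (Fin N) (Fin N) ℂ) ⊗ₖ (Y*X))
            - ((k₁ + k₂ : ℝ) : ℂ) • (X ⊗ₖ Y - Y ⊗ₖ X)) * flipMat N
          = ((k₁ - k₂ : ℝ) : ℂ) • (((Y*X) ⊗ₖ (1 : Matrix (Fin N) (Fin N) ℂ)) * flipMat N)
            - ((k₁ - k₂ : ℝ) : ℂ) • (((1 : Matrix (Fin N) (Fin N) ℂ) ⊗ₖ (Y*X)) * flipMat N)
            + ((k₁ + k₂ : ℝ) : ℂ) • ((Y ⊗ₖ X) * flipMat N)
            - ((k₁ + k₂ : ℝ) : ℂ) • ((X ⊗ₖ Y) * flipMat N)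
            + (Complex.I * (g:ℂ)) • ((1 : Matrix (Fin N) (Fin N) ℂ) ⊗ₖ (Y*X))
            - (Complex.I * (g:ℂ)) • ((1 : Matrix (Fin N) (Fin N) ℂ) ⊗ₖ (Y*X)) := by
            simp only [smul_sub, sub_mul, smul_mul_assoc]
            module
        _ = 0 := E1
    have T3 : ((k₁ - k₂ : ℝ) : ℂ) • ((Y*X) ⊗ₖ (1 : Matrix (Fin N) (Fin N) ℂ)
          - (1 : Matrix (Fin N) (Fin N) ℂ) ⊗ₖ (Y*X))
        = ((k₁ + k₂ : ℝ) : ℂ) • (X ⊗ₖ Y - Y ⊗ₖ X) := by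
      have := congrArg (· * flipMat N) T2
      simp only [mul_assoc, flip_mul_flip, mul_one, zero_mul] at this
      exact sub_eq_zero.mp (by simpa [sub_mul] using this)
    have hw : (((k₁ + k₂) / (k₁ - k₂) : ℝ) : ℂ)
        = ((k₁ - k₂ : ℝ) : ℂ)⁻¹ * ((k₁ + k₂ : ℝ) : ℂ) := by
      rw [Complex.ofReal_div, div_eq_inv_mul]
    rw [hXY, hw]
    calc (Y*X) ⊗ₖ (1 : Matrix (Fin N) (Fin N) ℂ)
          - (1 : Matrix (Fin N) (Fin N) ℂ) ⊗ₖ (Y*X)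
        = ((k₁ - k₂ : ℝ) : ℂ)⁻¹ • (((k₁ - k₂ : ℝ) : ℂ) •
            ((Y*X) ⊗ₖ (1 : Matrix (Fin N) (Fin N) ℂ)
              - (1 : Matrix (Fin N) (Fin N) ℂ) ⊗ₖ (Y*X))) := by
          rw [smul_smul, inv_mul_cancel₀ hu, one_smul]
      _ = ((k₁ - k₂ : ℝ) : ℂ)⁻¹ • (((k₁ + k₂ : ℝ) : ℂ) • (X ⊗ₖ Y - Y ⊗ₖ X)) := by rw [T3]
      _ = (((k₁ - k₂ : ℝ) : ℂ)⁻¹ * ((k₁ + k₂ : ℝ) : ℂ)) • (X ⊗ₖ Y - Y ⊗ₖ X) := by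
          rw [smul_smul]
  · intro H k₁ k₂ h1 h2
    set X := B k₁ with hX
    set Y := B k₂ with hY
    obtain ⟨hC, hD⟩ := H k₁ k₂ h1 h2
    have hXY : X*Y = Y*X := sub_eq_zero.mp hC
    have hu' : (k₁ - k₂ : ℝ) ≠ 0 := sub_ne_zero.mpr h1
    have hw : ((k₁ - k₂ : ℝ) : ℂ) * (((k₁ + k₂) / (k₁ - k₂) : ℝ) : ℂ)
        = ((k₁ + k₂ : ℝ) : ℂ) := by
      rw [← Complex.ofReal_mul, mul_div_cancel₀ _ hu']
    apply (step N g hg X Y k₁ k₂).mpr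
    calc ((k₁ - k₂ : ℝ) : ℂ) • (((X*Y) ⊗ₖ (1 : Matrix (Fin N) (Fin N) ℂ)) * flipMat N)
          - ((k₁ - k₂ : ℝ) : ℂ) • (((1 : Matrix (Fin N) (Fin N) ℂ) ⊗ₖ (Y*X)) * flipMat N)
          + ((k₁ + k₂ : ℝ) : ℂ) • ((Y ⊗ₖ X) * flipMat N)
          - ((k₁ + k₂ : ℝ) : ℂ) • ((X ⊗ₖ Y) * flipMat N)
          + (Complex.I * (g:ℂ)) • ((1 : Matrix (Fin N) (Fin N) ℂ) ⊗ₖ (X*Y))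
          - (Complex.I * (g:ℂ)) • ((1 : Matrix (Fin N) (Fin N) ℂ) ⊗ₖ (Y*X))
        = ((k₁ - k₂ : ℝ) : ℂ) • (((X*Y) ⊗ₖ (1 : Matrix (Fin N) (Fin N) ℂ)
              - (1 : Matrix (Fin N) (Fin N) ℂ) ⊗ₖ (Y*X)) * flipMat N)
          - ((k₁ + k₂ : ℝ) : ℂ) • ((X ⊗ₖ Y - Y ⊗ₖ X) * flipMat N)
          + (Complex.I * (g:ℂ)) • ((1 : Matrix (Fin N) (Fin N) ℂ) ⊗ₖ (X*Y))
          - (Complex.I * (g:ℂ)) • ((1 : Matrix (Fin N) (Fin N) ℂ) ⊗ₖ (Y*X)) := by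
            simp only [sub_mul]
            module
      _ = 0 := by
          rw [hD, hXY, smul_mul_assoc, smul_smul, hw]
          simp [hX, hY]
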